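/- Let 𝓛 be a continuous nest on a complex separable Hilbert space H and let 𝓜 be a norm closed Lie 𝓣(𝓛)-module. If x, y ∈ H are nonzero and the rank-one operator x⊗y belongs to 𝓜, then for every a ∈ M_x and every b ∈ (M̂_y)^⊥ the operator a⊗b belongs to 𝓜 (that is, 𝓜 contains every rank-one operator in Q_{M_x} B(H) Q_{(M̂_y)^⊥}). -/

import Mathlib

open scoped InnerProductSpace

variable {H : Type*} [NormedAddCommGroup H] [InnerProductSpace ℂ H]
  [CompleteSpace H] [TopologicalSpace.SeparableSpace H]

/-- A subspace lattice on `H`: a set of closed subspaces containing `⊥` and `⊤`,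
closed under arbitrary intersections and closed linear spans. -/
def IsSubspaceLattice (𝓛 : Set (Submodule ℂ H)) : Prop :=
  (∀ M ∈ 𝓛, IsClosed (M : Set H)) ∧ ⊥ ∈ 𝓛 ∧ ⊤ ∈ 𝓛 ∧
  (∀ S ⊆ 𝓛, sInf S ∈ 𝓛) ∧ (∀ S ⊆ 𝓛, (sSup S).topologicalClosure ∈ 𝓛)

/-- A nest: a totally ordered subspace lattice. -/
def IsNest (𝓛 : Set (Submodule ℂ H)) : Prop :=
  IsSubspaceLattice 𝓛 ∧ ∀ M ∈ 𝓛, ∀ N ∈ 𝓛, M ≤ N ∨ N ≤ M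

/-- A continuous nest. -/
def IsContinuousNest (𝓛 : Set (Submodule ℂ H)) : Prop :=
  IsNest 𝓛 ∧ ∀ M ∈ 𝓛, M = (sSup {N ∈ 𝓛 | N < M}).topologicalClosure

/-- `M_x`: the intersection of all members of `𝓛` containing `x`. -/
noncomputable def Mx (𝓛 : Set (Submodule ℂ H)) (x : H) : Submodule ℂ H :=
  sInf {M ∈ 𝓛 | x ∈ M}

/-- `M̂_x`: the closed span of all members of `𝓛` orthogonal to `x`. -/
noncomputable def Mhat (𝓛 : Set (Submodule ℂ H)) (x : H) : Submodule ℂ H :=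
  (sSup {M ∈ 𝓛 | ∀ v ∈ M, inner ℂ x v = (0 : ℂ)}).topologicalClosure

/-- `φ_T(M)`: the closed span of all members `M'` of `𝓛` with `T(M') ⊆ M`. -/
noncomputable def phiT (𝓛 : Set (Submodule ℂ H)) (T : H →L[ℂ] H) (M : Submodule ℂ H) :
    Submodule ℂ H :=
  (sSup {M' ∈ 𝓛 | ∀ v ∈ M', T v ∈ M}).topologicalClosure

/-- `Ψ_T(M)`: the intersection of all `M' ∈ 𝓛` with `φ_T(M') = φ_T(M)`. -/
noncomputable def PsiT (𝓛 : Set (Submodule ℂ H)) (T : H →L[ℂ] H) (M : Submodule ℂ H) :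
    Submodule ℂ H :=
  sInf {M' ∈ 𝓛 | phiT 𝓛 T M' = phiT 𝓛 T M}

/-- `σ_T(M)`: the closed span of all `M' ∈ 𝓛` with `φ_T(M') = φ_T(M)`. -/
noncomputable def sigmaT (𝓛 : Set (Submodule ℂ H)) (T : H →L[ℂ] H) (M : Submodule ℂ H) :
    Submodule ℂ H :=
  (sSup {M' ∈ 𝓛 | phiT 𝓛 T M' = phiT 𝓛 T M}).topologicalClosure

/-- The kernel map `ω_T`. -/
noncomputable def omegaT (𝓛 : Set (Submodule ℂ H)) (T : H →L[ℂ] H) (M : Submodule ℂ H) :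
    Submodule ℂ H × Submodule ℂ H :=
  (phiT 𝓛 T M, PsiT 𝓛 T M)

/-- The rank-one operator `x ⊗ y : z ↦ ⟨z, y⟩ x`. -/
noncomputable def rankOne (x y : H) : H →L[ℂ] H :=
  (innerSL ℂ y).smulRight x

/-- The nest algebra of a subspace lattice. -/
def nestAlg (𝓛 : Set (Submodule ℂ H)) : Set (H →L[ℂ] H) :=
  {T | ∀ M ∈ 𝓛, ∀ v ∈ M, T v ∈ M}

/-- Lie module over the nest algebra. -/
def IsLieModule (𝓛 : Set (Submodule ℂ H)) (𝓜 : Submodule ℂ (H →L[ℂ] H)) : Prop :=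
  ∀ A ∈ 𝓜, ∀ T ∈ nestAlg 𝓛, A.comp T - T.comp A ∈ 𝓜

/-- Orthogonal projection of a vector onto a closed subspace (junk value `0` if not closed). -/
noncomputable def projVec (N : Submodule ℂ H) (z : H) : H := by
  classical
  exact if h : IsClosed (N : Set H) then
    have : CompleteSpace N := h.completeSpace_coe
    (N.orthogonalProjectionOnto z : H)
  else 0

section Aux
open scoped ComplexInnerProductSpace
set_option linter.unusedSectionVars false

lemma rankOne_apply (u v z : H) : rankOne u v z = ⟪v, z⟫ • u := rfl

lemma rankOne_comp (u v p s : H) :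
    (rankOne u v).comp (rankOne p s) = ⟪v, p⟫ • rankOne u s := by
  ext z
  simp only [ContinuousLinearMap.comp_apply, ContinuousLinearMap.smul_apply, rankOne_apply,
    inner_smul_right]
  rw [smul_smul, mul_comm]

lemma rankOne_add_left (u u' v : H) : rankOne (u + u') v = rankOne u v + rankOne u' v := by
  ext z; simp [rankOne_apply, smul_add]

lemma rankOne_sub_left (u u' v : H) : rankOne (u - u') v = rankOne u v - rankOne u' v := by
  ext z; simp [rankOne_apply, smul_sub]

lemma rankOne_add_right (u v v' : H) : rankOne u (v + v') = rankOne u v + rankOne u v' := by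
  ext z; simp [rankOne_apply, inner_add_left, add_smul]

lemma rankOne_sub_right (u v v' : H) : rankOne u (v - v') = rankOne u v - rankOne u v' := by
  ext z; simp [rankOne_apply, inner_sub_left, sub_smul]

lemma rankOne_smul_left (c : ℂ) (u v : H) : rankOne (c • u) v = c • rankOne u v := by
  ext z; simp [rankOne_apply, smul_smul, mul_comm]

lemma rankOne_zero_left (v : H) : rankOne (0 : H) v = 0 := by
  ext z; simp [rankOne_apply]

lemma rankOne_zero_right (u : H) : rankOne u (0 : H) = 0 := by
  ext z; simp [rankOne_apply]

lemma norm_rankOne_le (u v : H) : ‖rankOne u v‖ ≤ ‖v‖ * ‖u‖ := by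
  refine ContinuousLinearMap.opNorm_le_bound _ (by positivity) fun z => ?_
  rw [rankOne_apply, norm_smul]
  calc ‖⟪v, z⟫‖ * ‖u‖ ≤ (‖v‖ * ‖z‖) * ‖u‖ := by
        gcongr; exact norm_inner_le_norm v z
    _ = ‖v‖ * ‖u‖ * ‖z‖ := by ring

lemma inner_orthogonal_left {K : Submodule ℂ H} {s p : H} (hs : s ∈ Kᗮ) (hp : p ∈ K) :
    ⟪s, p⟫ = 0 := by
  have h := (Submodule.mem_orthogonal K s).1 hs p hp
  rw [inner_eq_zero_symm]; exact h

lemma add_mem_nestAlg {𝓛 : Set (Submodule ℂ H)} {T S : H →L[ℂ] H}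
    (hT : T ∈ nestAlg 𝓛) (hS : S ∈ nestAlg 𝓛) : T + S ∈ nestAlg 𝓛 := by
  intro M hM v hv
  exact M.add_mem (hT M hM v hv) (hS M hM v hv)

lemma rankOne_mem_nestAlg {𝓛 : Set (Submodule ℂ H)} (hN : IsNest 𝓛)
    {K : Submodule ℂ H} (hK : K ∈ 𝓛) {p s : H} (hp : p ∈ K) (hs : s ∈ Kᗮ) :
    rankOne p s ∈ nestAlg 𝓛 := by
  intro M hM v hv
  rcases hN.2 M hM K hK with h | h
  · rw [rankOne_apply, inner_orthogonal_left hs (h hv), zero_smul]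
    exact M.zero_mem
  · exact M.smul_mem _ (h hp)

lemma mem_of_smul_mem {𝓜 : Submodule ℂ (H →L[ℂ] H)} {c : ℂ} (hc : c ≠ 0)
    {A : H →L[ℂ] H} (h : c • A ∈ 𝓜) : A ∈ 𝓜 := by
  have := 𝓜.smul_mem c⁻¹ h
  rwa [smul_smul, inv_mul_cancel₀ hc, one_smul] at this

lemma double_comm_rankOne {𝓛 : Set (Submodule ℂ H)} {𝓜 : Submodule ℂ (H →L[ℂ] H)}
    (hN : IsNest 𝓛) (hLie : IsLieModule 𝓛 𝓜)
    {x y : H} (hxy : rankOne x y ∈ 𝓜)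
    {K : Submodule ℂ H} (hK : K ∈ 𝓛) {p s : H} (hp : p ∈ K) (hs : s ∈ Kᗮ) :
    (⟪y, p⟫ * ⟪s, x⟫) • rankOne p s ∈ 𝓜 := by
  have hTA := rankOne_mem_nestAlg hN hK hp hs
  have h1 := hLie _ hxy (rankOne p s) hTA
  have h2 := hLie _ h1 (rankOne p s) hTA
  have hsp : ⟪s, p⟫ = 0 := inner_orthogonal_left hs hp
  have key : ((rankOne x y).comp (rankOne p s) - (rankOne p s).comp (rankOne x y)).comp (rankOne p s)
      - (rankOne p s).comp ((rankOne x y).comp (rankOne p s) - (rankOne p s).comp (rankOne x y))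
      = (-2 : ℂ) • ((⟪y, p⟫ * ⟪s, x⟫) • rankOne p s) := by
    ext z
    simp only [ContinuousLinearMap.comp_apply, ContinuousLinearMap.sub_apply,
      ContinuousLinearMap.smul_apply, rankOne_apply, inner_smul_right, hsp,
      map_sub, map_smul, smul_smul, mul_zero, zero_mul, zero_smul, sub_zero, zero_sub,
      inner_zero_right, inner_zero_left]
    module
  have := 𝓜.smul_mem ((-2 : ℂ)⁻¹) (key ▸ h2)
  rwa [smul_smul, inv_mul_cancel₀ (by norm_num), one_smul] at this

lemma lemL {𝓛 : Set (Submodule ℂ H)} {𝓜 : Submodule ℂ (H →L[ℂ] H)}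
    (hN : IsNest 𝓛) (hLie : IsLieModule 𝓛 𝓜)
    {x y : H} (hxy : rankOne x y ∈ 𝓜)
    {K : Submodule ℂ H} (hK : K ∈ 𝓛)
    {p₀ s₀ : H} (hp₀ : p₀ ∈ K) (hyp₀ : ⟪y, p₀⟫ ≠ 0) (hs₀ : s₀ ∈ Kᗮ) (hs₀x : ⟪s₀, x⟫ ≠ 0) :
    ∀ p ∈ K, ∀ s ∈ Kᗮ, rankOne p s ∈ 𝓜 := by
  have good : ∀ p ∈ K, ∀ s ∈ Kᗮ, ⟪s, x⟫ ≠ 0 → rankOne p s ∈ 𝓜 := by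
    intro p hp s hs hsx
    by_cases hyp : ⟪y, p⟫ = 0
    · have e1 : ⟪y, p + p₀⟫ ≠ 0 := by rw [inner_add_right, hyp, zero_add]; exact hyp₀
      have h1 : rankOne (p + p₀) s ∈ 𝓜 :=
        mem_of_smul_mem (mul_ne_zero e1 hsx)
          (double_comm_rankOne hN hLie hxy hK (K.add_mem hp hp₀) hs)
      have h2 : rankOne p₀ s ∈ 𝓜 :=
        mem_of_smul_mem (mul_ne_zero hyp₀ hsx) (double_comm_rankOne hN hLie hxy hK hp₀ hs)
      have : rankOne p s = rankOne (p + p₀) s - rankOne p₀ s := by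
        rw [rankOne_add_left]; abel
      rw [this]; exact 𝓜.sub_mem h1 h2
    · exact mem_of_smul_mem (mul_ne_zero hyp hsx) (double_comm_rankOne hN hLie hxy hK hp hs)
  intro p hp s hs
  by_cases hsx : ⟪s, x⟫ = 0
  · have e1 : ⟪s + s₀, x⟫ ≠ 0 := by rw [inner_add_left, hsx, zero_add]; exact hs₀x
    have h1 : rankOne p (s + s₀) ∈ 𝓜 := good p hp (s + s₀) (Kᗮ.add_mem hs hs₀) e1
    have h2 : rankOne p s₀ ∈ 𝓜 := good p hp s₀ hs₀ hs₀x
    have : rankOne p s = rankOne p (s + s₀) - rankOne p s₀ := by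
      rw [rankOne_add_right]; abel
    rw [this]; exact 𝓜.sub_mem h1 h2
  · exact good p hp s hs hsx

end Aux

section Aux2
open scoped ComplexInnerProductSpace
set_option linter.unusedSectionVars false

lemma projVec_eq_proj {N : Submodule ℂ H} (h : IsClosed (N : Set H)) (z : H) :
    projVec N z = (haveI := h.completeSpace_coe; ((N.orthogonalProjectionOnto z : N) : H)) := by
  simp [projVec, h]

lemma projVec_mem {N : Submodule ℂ H} (h : IsClosed (N : Set H)) (z : H) :
    projVec N z ∈ N := by
  haveI := h.completeSpace_coe
  rw [projVec_eq_proj h]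
  exact (N.orthogonalProjectionOnto z).2

lemma sub_projVec_mem {N : Submodule ℂ H} (h : IsClosed (N : Set H)) (z : H) :
    z - projVec N z ∈ Nᗮ := by
  haveI := h.completeSpace_coe
  rw [projVec_eq_proj h]
  exact Submodule.sub_starProjection_mem_orthogonal z

lemma projVec_of_mem_orthogonal {N : Submodule ℂ H} (h : IsClosed (N : Set H)) {z : H}
    (hz : z ∈ Nᗮ) : projVec N z = 0 := by
  haveI := h.completeSpace_coe
  rw [projVec_eq_proj h]
  rw [Submodule.orthogonalProjectionOnto_apply_of_mem_orthogonal hz]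
  rfl

lemma norm_projVec_le {N : Submodule ℂ H} (h : IsClosed (N : Set H)) (z : H) :
    ‖projVec N z‖ ≤ ‖z‖ := by
  haveI := h.completeSpace_coe
  rw [projVec_eq_proj h]
  calc ‖((N.orthogonalProjectionOnto z : N) : H)‖ = ‖N.orthogonalProjectionOnto z‖ := rfl
    _ ≤ ‖N.orthogonalProjectionOnto‖ * ‖z‖ := (N.orthogonalProjectionOnto).le_opNorm z
    _ ≤ 1 * ‖z‖ := mul_le_mul_of_nonneg_right (Submodule.orthogonalProjectionOnto_norm_le (K := N)) (norm_nonneg z)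
    _ = ‖z‖ := one_mul _

lemma projVec_proj_of_le {M N : Submodule ℂ H} (hM : IsClosed (M : Set H))
    (hN : IsClosed (N : Set H)) (h : M ≤ N) (b : H) :
    projVec M b = projVec M (projVec N b) := by
  have h0 : b - projVec N b ∈ Mᗮ := Submodule.orthogonal_le h (sub_projVec_mem hN b)
  haveI := hM.completeSpace_coe
  rw [projVec_eq_proj hM, projVec_eq_proj hM]
  have : M.orthogonalProjectionOnto b = M.orthogonalProjectionOnto (projVec N b) := by
    conv_lhs => rw [show b = projVec N b + (b - projVec N b) by abel]
    rw [map_add, Submodule.orthogonalProjectionOnto_apply_of_mem_orthogonal h0, add_zero]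
  exact congrArg _ this

lemma norm_projVec_mono {M N : Submodule ℂ H} (hM : IsClosed (M : Set H))
    (hN : IsClosed (N : Set H)) (h : M ≤ N) (b : H) :
    ‖projVec M b‖ ≤ ‖projVec N b‖ := by
  rw [projVec_proj_of_le hM hN h b]
  exact norm_projVec_le hM _

lemma inner_projVec_self {N : Submodule ℂ H} (h : IsClosed (N : Set H)) (b : H) :
    ⟪projVec N b, b⟫ = (‖projVec N b‖ ^ 2 : ℝ) := by
  have h1 : ⟪projVec N b, b - projVec N b⟫ = 0 := by
    rw [inner_eq_zero_symm]
    exact inner_orthogonal_left (sub_projVec_mem h b) (projVec_mem h b)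
  have : ⟪projVec N b, b⟫ = ⟪projVec N b, projVec N b⟫ + ⟪projVec N b, b - projVec N b⟫ := by
    rw [← inner_add_right]; congr 1; abel
  rw [this, h1, add_zero, inner_self_eq_norm_sq_to_K]
  norm_cast

lemma pythag {x y : H} (h : ⟪x, y⟫ = 0) : ‖x + y‖ ^ 2 = ‖x‖ ^ 2 + ‖y‖ ^ 2 := by
  have := norm_add_sq_eq_norm_sq_add_norm_sq_of_inner_eq_zero x y h
  simpa [pow_two] using this

lemma usc_nest {𝓛 : Set (Submodule ℂ H)} (hC : IsContinuousNest 𝓛)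
    {L : Submodule ℂ H} (hL : L ∈ 𝓛) :
    sInf {M | M ∈ 𝓛 ∧ L < M} = L := by
  have hFmem : sInf {M | M ∈ 𝓛 ∧ L < M} ∈ 𝓛 := hC.1.1.2.2.2.1 _ (fun M hM => hM.1)
  have hLF : L ≤ sInf {M | M ∈ 𝓛 ∧ L < M} := le_sInf (fun M hM => le_of_lt hM.2)
  rcases eq_or_lt_of_le hLF with h | h
  · exact h.symm
  · exfalso
    have hcont := hC.2 _ hFmem
    have h1 : sSup {N | N ∈ 𝓛 ∧ N < sInf {M | M ∈ 𝓛 ∧ L < M}} ≤ L := by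
      refine sSup_le fun N hN' => ?_
      rcases hN' with ⟨hN1, hN2⟩
      rcases hC.1.2 N hN1 L hL with h1 | h1
      · exact h1
      · rcases eq_or_lt_of_le h1 with h2 | h2
        · exact le_of_eq h2.symm
        · exact absurd (sInf_le (show N ∈ {M | M ∈ 𝓛 ∧ L < M} from ⟨hN1, h2⟩)) (not_le_of_gt hN2)
    have hle : sInf {M | M ∈ 𝓛 ∧ L < M} ≤ L := by
      rw [hcont]
      exact Submodule.topologicalClosure_minimal _ h1 (hC.1.1.1 L hL)
    exact absurd hle (not_le_of_gt h)

lemma exists_strict_between {𝓛 : Set (Submodule ℂ H)} (hC : IsContinuousNest 𝓛)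
    {L C : Submodule ℂ H} (hL : L ∈ 𝓛) (hCm : C ∈ 𝓛) (hLC : L < C) :
    ∃ M, M ∈ 𝓛 ∧ L < M ∧ M < C := by
  by_contra hcon
  push_neg at hcon
  have hCle : C ≤ sInf {M | M ∈ 𝓛 ∧ L < M} := by
    refine le_sInf fun M hM => ?_
    rcases hC.1.2 M hM.1 C hCm with h1 | h1
    · rcases eq_or_lt_of_le h1 with h2 | h2
      · exact le_of_eq h2.symm
      · exact absurd h2 (hcon M hM.1 hM.2)
    · exact h1
  rw [usc_nest hC hL] at hCle
  exact absurd hCle (not_le_of_gt hLC)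
end Aux2

section Aux3
open scoped ComplexInnerProductSpace
open Filter Topology
set_option linter.unusedSectionVars false
set_option maxHeartbeats 1000000

lemma qsmall {𝓛 : Set (Submodule ℂ H)} (hC : IsContinuousNest 𝓛)
    {E K₀ : Submodule ℂ H} (hE : E ∈ 𝓛) (hK₀ : K₀ ∈ 𝓛) (hEK : E < K₀)
    {b : H} (hb : b ∈ Eᗮ) {ε : ℝ} (hε : 0 < ε) :
    ∃ K, K ∈ 𝓛 ∧ E < K ∧ K ≤ K₀ ∧ ‖projVec K b‖ < ε := by
  classical
  have hcl : ∀ M ∈ 𝓛, IsClosed (M : Set H) := hC.1.1.1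
  set S : Set (Submodule ℂ H) := {M | M ∈ 𝓛 ∧ E < M ∧ M ≤ K₀} with hS
  have hK₀S : K₀ ∈ S := ⟨hK₀, hEK, le_rfl⟩
  set T : Set ℝ := (fun M => ‖projVec M b‖ ^ 2) '' S with hT
  have hTne : T.Nonempty := ⟨_, ⟨K₀, hK₀S, rfl⟩⟩
  have hTbdd : ∀ t ∈ T, 0 ≤ t := by rintro t ⟨M, _, rfl⟩; positivity
  have hTbddBelow : BddBelow T := ⟨0, fun t ht => hTbdd t ht⟩
  have hc2zero : sInf T = 0 := by
    have hseq : ∀ n : ℕ, ∃ M, M ∈ S ∧ ‖projVec M b‖ ^ 2 < sInf T + 1 / ((n : ℝ) + 1) := by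
      intro n
      obtain ⟨t, ⟨M, hMS, rfl⟩, hlt⟩ :=
        Real.lt_sInf_add_pos hTne (by positivity : (0:ℝ) < 1/((n:ℝ)+1))
      exact ⟨M, hMS, hlt⟩
    choose M0 hM0S hM0lt using hseq
    let Ms : ℕ → Submodule ℂ H := fun n =>
      Nat.rec (M0 0) (fun n prev => M0 (n+1) ⊓ prev) n
    have hMsucc : ∀ n, Ms (n+1) = M0 (n+1) ⊓ Ms n := fun n => rfl
    have hMsS : ∀ n, Ms n ∈ S := by
      intro n; induction n with
      | zero => exact hM0S 0
      | succ n ih =>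
        rw [hMsucc]
        rcases hC.1.2 (M0 (n+1)) (hM0S (n+1)).1 (Ms n) ih.1 with h | h
        · rw [inf_eq_left.2 h]; exact hM0S (n+1)
        · rw [inf_eq_right.2 h]; exact ih
    have hMsle : ∀ n, Ms (n+1) ≤ Ms n := by
      intro n; rw [hMsucc]; exact inf_le_right
    have hanti : Antitone Ms := antitone_nat_of_succ_le hMsle
    have hMslt : ∀ n, ‖projVec (Ms n) b‖ ^ 2 < sInf T + 1 / ((n : ℝ) + 1) := by
      intro n; induction n with
      | zero => exact hM0lt 0
      | succ n ih =>
        have hmono : ‖projVec (Ms (n+1)) b‖ ≤ ‖projVec (M0 (n+1)) b‖ := by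
          rw [hMsucc]
          rcases hC.1.2 (M0 (n+1)) (hM0S (n+1)).1 (Ms n) (hMsS n).1 with h | h
          · rw [inf_eq_left.2 h]
          · rw [inf_eq_right.2 h]
            exact norm_projVec_mono (hcl _ (hMsS n).1) (hcl _ (hM0S (n+1)).1) h b
        have := hM0lt (n+1)
        nlinarith [norm_nonneg (projVec (Ms (n+1)) b), norm_nonneg (projVec (M0 (n+1)) b)]
    have hMsge : ∀ n, sInf T ≤ ‖projVec (Ms n) b‖ ^ 2 := fun n =>
      csInf_le hTbddBelow ⟨Ms n, hMsS n, rfl⟩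
    set u : ℕ → H := fun n => projVec (Ms n) b with hu
    have hkey : ∀ m n, n ≤ m → ⟪u n - u m, u m⟫ = 0 := by
      intro m n hnm
      have h1 : u m = projVec (Ms m) (u n) :=
        projVec_proj_of_le (hcl _ (hMsS m).1) (hcl _ (hMsS n).1) (hanti hnm) b
      have h2 : u n - u m ∈ (Ms m)ᗮ := by rw [h1]; exact sub_projVec_mem (hcl _ (hMsS m).1) (u n)
      exact inner_orthogonal_left h2 (projVec_mem (hcl _ (hMsS m).1) b)
    have hpyth : ∀ m n, n ≤ m → ‖u n - u m‖ ^ 2 = ‖u n‖ ^ 2 - ‖u m‖ ^ 2 := by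
      intro m n hnm
      have := pythag (hkey m n hnm)
      rw [sub_add_cancel] at this
      linarith
    have hcauchy : CauchySeq u := by
      rw [Metric.cauchySeq_iff']
      intro ε' hε'
      obtain ⟨N, hN⟩ := exists_nat_one_div_lt (show (0:ℝ) < ε' ^ 2 by positivity)
      refine ⟨N, fun n hn => ?_⟩
      rw [dist_eq_norm, ← norm_neg, neg_sub]
      have h1 : ‖u N - u n‖ ^ 2 = ‖u N‖ ^ 2 - ‖u n‖ ^ 2 := hpyth n N hn
      have h2 : ‖u N‖ ^ 2 < sInf T + 1 / ((N:ℝ)+1) := hMslt N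
      have h3 : sInf T ≤ ‖u n‖ ^ 2 := hMsge n
      have h4 : ‖u N - u n‖ ^ 2 < ε' ^ 2 := by
        have : (1:ℝ) / ((N:ℝ)+1) < ε' ^ 2 := hN
        linarith
      exact lt_of_pow_lt_pow_left₀ 2 (le_of_lt hε') h4
    obtain ⟨w, hw⟩ := cauchySeq_tendsto_of_complete hcauchy
    have hwmem : ∀ n, w ∈ Ms n := by
      intro n
      refine (hcl _ (hMsS n).1).mem_of_tendsto hw (Filter.eventually_atTop.2 ⟨n, fun m hm => ?_⟩)
      exact (hanti hm) (projVec_mem (hcl _ (hMsS m).1) b)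
    have hnormlim : Tendsto (fun n => ‖u n‖ ^ 2) atTop (𝓝 (sInf T)) := by
      have h0 : Tendsto (fun n : ℕ => 1 / ((n:ℝ)+1)) atTop (𝓝 0) :=
        tendsto_one_div_add_atTop_nhds_zero_nat
      have h1 : Tendsto (fun n : ℕ => sInf T + 1 / ((n:ℝ)+1)) atTop (𝓝 (sInf T)) := by
        simpa using tendsto_const_nhds.add h0
      exact tendsto_of_tendsto_of_tendsto_of_le_of_le tendsto_const_nhds h1
        (fun n => hMsge n) (fun n => le_of_lt (hMslt n))
    have hwnorm : ‖w‖ ^ 2 = sInf T :=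
      tendsto_nhds_unique ((hw.norm).pow 2) hnormlim
    have hclaimA : ∀ M, M ∈ 𝓛 → E < M → w ∈ M := by
      intro M hM hEM
      rcases Classical.em (∃ n, Ms n ≤ M) with hex | hex
      · obtain ⟨n, hn⟩ := hex; exact hn (hwmem n)
      · push_neg at hex
        have hle : ∀ n, M ≤ Ms n := by
          intro n
          rcases hC.1.2 M hM (Ms n) (hMsS n).1 with h | h
          · exact h
          · exact absurd h (hex n)
        have hMS : M ∈ S := ⟨hM, hEM, le_trans (hle 0) (hMsS 0).2.2⟩
        have hvc2 : sInf T ≤ ‖projVec M b‖ ^ 2 := csInf_le hTbddBelow ⟨M, hMS, rfl⟩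
        have hv : ∀ n, ⟪u n - projVec M b, projVec M b⟫ = 0 := by
          intro n
          have h1 : projVec M b = projVec M (u n) :=
            projVec_proj_of_le (hcl M hM) (hcl _ (hMsS n).1) (hle n) b
          have h2 : u n - projVec M b ∈ Mᗮ := by
            rw [h1]; exact sub_projVec_mem (hcl M hM) (u n)
          exact inner_orthogonal_left h2 (projVec_mem (hcl M hM) b)
        have hlim : ⟪w - projVec M b, projVec M b⟫ = 0 := by
          have ht : Tendsto (fun n => ⟪u n - projVec M b, projVec M b⟫) atTop
              (𝓝 ⟪w - projVec M b, projVec M b⟫) :=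
            (hw.sub tendsto_const_nhds).inner tendsto_const_nhds
          have heq : (fun n => ⟪u n - projVec M b, projVec M b⟫) = fun _ => (0 : ℂ) :=
            funext hv
          rw [heq] at ht
          exact (tendsto_nhds_unique ht tendsto_const_nhds).symm ▸ rfl
        have hsq : ‖w‖ ^ 2 = ‖w - projVec M b‖ ^ 2 + ‖projVec M b‖ ^ 2 := by
          have := pythag hlim
          rw [sub_add_cancel] at this
          exact this
        have h0 : ‖w - projVec M b‖ ^ 2 ≤ 0 := by rw [hwnorm] at hsq; linarith
        have h1 : ‖w - projVec M b‖ = 0 := by nlinarith [norm_nonneg (w - projVec M b)]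
        have h2 : w = projVec M b := by
          have := norm_sub_eq_zero_iff.1 h1; exact this
        rw [h2]; exact projVec_mem (hcl M hM) b
    have hwE : w ∈ E := by
      have : w ∈ sInf {M | M ∈ 𝓛 ∧ E < M} :=
        Submodule.mem_sInf.2 fun M hM => hclaimA M hM.1 hM.2
      rwa [usc_nest hC hE] at this
    have hub : ∀ n, ⟪u n, b⟫ = ((‖u n‖ ^ 2 : ℝ) : ℂ) := fun n =>
      inner_projVec_self (hcl _ (hMsS n).1) b
    have h1 : Tendsto (fun n => ⟪u n, b⟫) atTop (𝓝 ⟪w, b⟫) :=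
      hw.inner tendsto_const_nhds
    have h2 : Tendsto (fun n => ((‖u n‖ ^ 2 : ℝ) : ℂ)) atTop (𝓝 ((sInf T : ℝ) : ℂ)) :=
      (Complex.continuous_ofReal.tendsto _).comp hnormlim
    have heq : (fun n => ⟪u n, b⟫) = fun n => ((‖u n‖ ^ 2 : ℝ) : ℂ) := funext hub
    rw [heq] at h1
    have h3 : ⟪w, b⟫ = ((sInf T : ℝ) : ℂ) := tendsto_nhds_unique h1 h2
    have h4 : ⟪w, b⟫ = 0 := (Submodule.mem_orthogonal E b).1 hb w hwE
    rw [h4] at h3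
    exact_mod_cast h3.symm
  obtain ⟨t, ⟨K, hKS, rfl⟩, hlt⟩ :=
    Real.lt_sInf_add_pos hTne (show (0:ℝ) < ε ^ 2 by positivity)
  rw [hc2zero, zero_add] at hlt
  exact ⟨K, hKS.1, hKS.2.1, hKS.2.2, lt_of_pow_lt_pow_left₀ 2 (le_of_lt hε) hlt⟩
end Aux3

section Aux4
open scoped ComplexInnerProductSpace
open Filter Topology Finset
set_option linter.unusedSectionVars false
set_option maxHeartbeats 2000000

lemma master_identity {𝓛 : Set (Submodule ℂ H)} {𝓜 : Submodule ℂ (H →L[ℂ] H)}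
    (hN : IsNest 𝓛) (hLie : IsLieModule 𝓛 𝓜)
    {x y : H} (hxy : rankOne x y ∈ 𝓜)
    {K₁ K₂ : Submodule ℂ H} (hK₁ : K₁ ∈ 𝓛) (hK₂ : K₂ ∈ 𝓛) (h12 : K₁ ≤ K₂)
    {p₁ s₂ : H} (hp₁ : p₁ ∈ K₁) (hyp₁ : ⟪y, p₁⟫ = 1) (hs₂ : s₂ ∈ K₂ᗮ) (hs₂x : ⟪s₂, x⟫ = 1)
    {p₂ s₁ : H} (hp₂ : p₂ ∈ K₂) (hs₁ : s₁ ∈ K₁ᗮ) :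
    rankOne p₂ s₁ - ⟪s₁, p₂⟫ • ((2⁻¹ : ℂ) • (rankOne x s₂ + rankOne p₁ y)) ∈ 𝓜 := by
  have hs₂K₁ : s₂ ∈ K₁ᗮ := Submodule.orthogonal_le h12 hs₂
  have hp₁K₂ : p₁ ∈ K₂ := h12 hp₁
  have hL1 : ∀ p ∈ K₁, ∀ s ∈ K₁ᗮ, rankOne p s ∈ 𝓜 :=
    lemL hN hLie hxy hK₁ hp₁ (by rw [hyp₁]; exact one_ne_zero) hs₂K₁
      (by rw [hs₂x]; exact one_ne_zero)
  have hL2 : ∀ p ∈ K₂, ∀ s ∈ K₂ᗮ, rankOne p s ∈ 𝓜 :=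
    lemL hN hLie hxy hK₂ hp₁K₂ (by rw [hyp₁]; exact one_ne_zero) hs₂
      (by rw [hs₂x]; exact one_ne_zero)
  set T : H →L[ℂ] H := rankOne p₁ s₁ + rankOne p₂ s₂ with hTdef
  have hT : T ∈ nestAlg 𝓛 :=
    add_mem_nestAlg (rankOne_mem_nestAlg hN hK₁ hp₁ hs₁) (rankOne_mem_nestAlg hN hK₂ hp₂ hs₂)
  have h1 := hLie _ hxy T hT
  have h2 := hLie _ h1 T hT
  have o11 : ⟪s₁, p₁⟫ = 0 := inner_orthogonal_left hs₁ hp₁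
  have o21 : ⟪s₂, p₁⟫ = 0 := inner_orthogonal_left hs₂K₁ hp₁
  have o22 : ⟪s₂, p₂⟫ = 0 := inner_orthogonal_left hs₂ hp₂
  have key : rankOne p₂ s₁ - ⟪s₁, p₂⟫ • ((2⁻¹ : ℂ) • (rankOne x s₂ + rankOne p₁ y))
      = (-2⁻¹ : ℂ) • ((((rankOne x y).comp T - T.comp (rankOne x y)).comp T
          - T.comp ((rankOne x y).comp T - T.comp (rankOne x y)))
        + (2 * ⟪s₁, x⟫) • rankOne p₁ s₁ + (2 * ⟪y, p₂⟫) • rankOne p₂ s₂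
        + (2 * (⟪s₁, x⟫ * ⟪y, p₂⟫)) • rankOne p₁ s₂) := by
    ext z
    simp only [hTdef, ContinuousLinearMap.comp_apply, ContinuousLinearMap.sub_apply,
      ContinuousLinearMap.add_apply, ContinuousLinearMap.smul_apply, rankOne_apply,
      inner_add_right, inner_smul_right, map_add, map_smul, map_sub,
      o11, o21, o22, hyp₁, hs₂x, mul_zero, zero_mul, mul_one, one_mul,
      inner_zero_right, inner_zero_left,
      zero_smul, smul_zero, add_zero, zero_add, smul_smul]
    module
  rw [key]
  refine 𝓜.smul_mem _ (𝓜.add_mem (𝓜.add_mem (𝓜.add_mem h2 ?_) ?_) ?_)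
  · exact 𝓜.smul_mem _ (hL1 p₁ hp₁ s₁ hs₁)
  · exact 𝓜.smul_mem _ (hL2 p₂ hp₂ s₂ hs₂)
  · exact 𝓜.smul_mem _ (hL2 p₁ hp₁K₂ s₂ hs₂)

lemma exists_orthochain {𝓛 : Set (Submodule ℂ H)} (hC : IsContinuousNest 𝓛)
    {K₁ K₂ : Submodule ℂ H} (hK₁ : K₁ ∈ 𝓛) (hK₂ : K₂ ∈ 𝓛) (h12 : K₁ < K₂) (n : ℕ) :
    ∃ e : Fin n → H, (∀ i, e i ∈ K₂) ∧ (∀ i, e i ∈ K₁ᗮ) ∧ Orthonormal ℂ e := by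
  classical
  have hcl : ∀ M ∈ 𝓛, IsClosed (M : Set H) := hC.1.1.1
  have hstep : ∀ A : {L : Submodule ℂ H // L ∈ 𝓛 ∧ K₁ ≤ L ∧ L < K₂},
      ∃ B : {L : Submodule ℂ H // L ∈ 𝓛 ∧ K₁ ≤ L ∧ L < K₂}, A.1 < B.1 := by
    intro A
    obtain ⟨M, hM, h1, h2⟩ := exists_strict_between hC A.2.1 hK₂ A.2.2.2
    exact ⟨⟨M, hM, le_trans A.2.2.1 (le_of_lt h1), h2⟩, h1⟩
  choose f hf using hstep
  set L : ℕ → {L : Submodule ℂ H // L ∈ 𝓛 ∧ K₁ ≤ L ∧ L < K₂} :=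
    fun k => f^[k] ⟨K₁, hK₁, le_rfl, h12⟩ with hL
  have hLsucc : ∀ k, (L k).1 < (L (k+1)).1 := by
    intro k
    have : L (k+1) = f (L k) := by rw [hL]; simp [Function.iterate_succ_apply']
    rw [this]
    exact hf (L k)
  have hLmono : StrictMono (fun k => (L k).1) := strictMono_nat_of_lt_succ hLsucc
  have hpick : ∀ i : Fin n, ∃ v, v ∈ (L (i+1)).1 ∧ v ∉ (L i).1 := by
    intro i
    exact SetLike.exists_of_lt (hLsucc i)
  choose v hv1 hv2 using hpick
  have hw : ∀ i : Fin n, v i - projVec (L i).1 (v i) ≠ 0 := by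
    intro i h0
    exact hv2 i (by
      have : v i = projVec (L i).1 (v i) := by
        have := sub_eq_zero.1 h0; exact this
      rw [this]; exact projVec_mem (hcl _ (L i).2.1) _)
  set w : Fin n → H := fun i => v i - projVec (L i).1 (v i) with hwdef
  set e : Fin n → H := fun i => (‖w i‖ : ℂ)⁻¹ • w i with hedef
  have hwK₂ : ∀ i : Fin n, w i ∈ K₂ := by
    intro i
    have h1 : v i ∈ (L (i+1)).1 := hv1 i
    have h2 : projVec (L i).1 (v i) ∈ (L (i+1)).1 :=
      (le_of_lt (hLsucc i)) (projVec_mem (hcl _ (L i).2.1) _)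
    exact (le_of_lt (L (i+1)).2.2.2) (Submodule.sub_mem _ h1 h2)
  have hworth : ∀ i : Fin n, w i ∈ K₁ᗮ := by
    intro i
    exact Submodule.orthogonal_le (L i).2.2.1 (sub_projVec_mem (hcl _ (L i).2.1) (v i))
  have hwLi : ∀ i : Fin n, w i ∈ ((L (i:ℕ)).1)ᗮ := fun i => sub_projVec_mem (hcl _ (L (i:ℕ)).2.1) (v i)
  have hwmemL : ∀ i : Fin n, w i ∈ (L (i+1)).1 := by
    intro i
    have h1 : v i ∈ (L (i+1)).1 := hv1 i
    have h2 : projVec (L i).1 (v i) ∈ (L (i+1)).1 :=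
      (le_of_lt (hLsucc i)) (projVec_mem (hcl _ (L i).2.1) _)
    exact Submodule.sub_mem _ h1 h2
  have hworthij : ∀ i j : Fin n, (i : ℕ) < (j : ℕ) → ⟪w j, w i⟫ = 0 := by
    intro i j hij
    have h1 : w i ∈ ((L j).1) := by
      have : (L (i+1)).1 ≤ (L j).1 := hLmono.monotone (by omega)
      exact this (hwmemL i)
    have h2 : w j ∈ ((L j).1)ᗮ := hwLi j
    exact inner_orthogonal_left h2 h1
  refine ⟨e, fun i => Submodule.smul_mem _ _ (hwK₂ i), fun i => Submodule.smul_mem _ _ (hworth i), ?_⟩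
  rw [orthonormal_iff_ite]
  intro i j
  by_cases hij : i = j
  · subst hij
    simp only [hedef, if_pos rfl, inner_smul_left, inner_smul_right, map_inv₀,
      Complex.conj_ofReal]
    rw [inner_self_eq_norm_sq_to_K]
    have hnz : (‖w i‖ : ℂ) ≠ 0 := by
      simpa using (norm_ne_zero_iff.2 (hw i))
    field_simp
    simp
  · rw [if_neg hij]
    have hz : ⟪w i, w j⟫ = 0 := by
      rcases lt_or_gt_of_ne (fun h => hij (Fin.ext h) : (i:ℕ) ≠ (j:ℕ)) with h | h
      · exact inner_eq_zero_symm.2 (hworthij i j h)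
      · exact hworthij j i h
    simp [hedef, inner_smul_left, inner_smul_right, hz]

end Aux4

section Aux5
open scoped ComplexInnerProductSpace
open Filter Topology Finset
set_option linter.unusedSectionVars false
set_option maxHeartbeats 2000000

lemma norm_sum_rankOne_le {n : ℕ} {e : Fin n → H} (he : Orthonormal ℂ e) :
    ‖∑ i, rankOne (e i) (e i)‖ ≤ 1 := by
  refine ContinuousLinearMap.opNorm_le_bound _ zero_le_one fun z => ?_
  rw [one_mul]
  have happ : (∑ i, rankOne (e i) (e i)) z = ∑ i, ⟪e i, z⟫ • e i := by
    rw [ContinuousLinearMap.sum_apply]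
    exact Finset.sum_congr rfl fun i _ => rfl
  rw [happ]
  have h1 : ⟪(∑ i, ⟪e i, z⟫ • e i), (∑ i, ⟪e i, z⟫ • e i)⟫
      = ((∑ i, ‖⟪e i, z⟫‖ ^ 2 : ℝ) : ℂ) := by
    rw [sum_inner]
    push_cast
    refine Finset.sum_congr rfl fun i _ => ?_
    rw [inner_smul_left, he.inner_right_fintype, RCLike.conj_mul]
    norm_cast
  have h2 : ‖∑ i, ⟪e i, z⟫ • e i‖ ^ 2 = ∑ i, ‖⟪e i, z⟫‖ ^ 2 := by
    have h3 := inner_self_eq_norm_sq_to_K (𝕜 := ℂ) (∑ i, ⟪e i, z⟫ • e i)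
    rw [h1] at h3
    norm_cast at h3
    exact Complex.ofReal_inj.mp h3.symm
  have hb : ∑ i, ‖⟪e i, z⟫‖ ^ 2 ≤ ‖z‖ ^ 2 := he.sum_inner_products_le z
  have h4 : ‖∑ i, ⟪e i, z⟫ • e i‖ ^ 2 ≤ ‖z‖ ^ 2 := by rw [h2]; exact hb
  exact le_of_pow_le_pow_left₀ two_ne_zero (norm_nonneg z) h4

end Aux5


section MainProof
open scoped InnerProductSpace
set_option linter.unusedSectionVars false
set_option maxHeartbeats 4000000

theorem stmt_17 (𝓛 : Set (Submodule ℂ H)) (h𝓛 : IsContinuousNest 𝓛)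
    (𝓜 : Submodule ℂ (H →L[ℂ] H)) (hclosed : IsClosed (𝓜 : Set (H →L[ℂ] H)))
    (hLie : IsLieModule 𝓛 𝓜)
    (x y : H) (hx : x ≠ 0) (hy : y ≠ 0) (hxy : rankOne x y ∈ 𝓜) :
    ∀ a ∈ Mx 𝓛 x, ∀ b ∈ (Mhat 𝓛 y)ᗮ, rankOne a b ∈ 𝓜 := by
  classical
  intro a ha b hb
  by_cases ha0 : a = 0
  · rw [ha0, rankOne_zero_left]; exact 𝓜.zero_mem
  by_cases hb0 : b = 0
  · rw [hb0, rankOne_zero_right]; exact 𝓜.zero_mem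
  have hNest : IsNest 𝓛 := h𝓛.1
  have hcl : ∀ M ∈ 𝓛, IsClosed (M : Set H) := hNest.1.1
  set P := Mx 𝓛 x with hPdef
  set E := Mhat 𝓛 y with hEdef
  have hP𝓛 : P ∈ 𝓛 := hNest.1.2.2.2.1 _ (fun M hM => hM.1)
  have hE𝓛 : E ∈ 𝓛 := hNest.1.2.2.2.2 _ (fun M hM => hM.1)
  have hxP : x ∈ P := Submodule.mem_sInf.2 fun M hM => hM.2
  have hEy : ∀ v ∈ E, ⟪y, v⟫_ℂ = 0 := by
    have hle : E ≤ LinearMap.ker (innerSL ℂ y : H →ₗ[ℂ] ℂ) := by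
      refine Submodule.topologicalClosure_minimal _ (sSup_le fun M hM => ?_) ?_
      · intro u hu
        rw [LinearMap.mem_ker]
        exact hM.2 u hu
      · exact ContinuousLinearMap.isClosed_ker (innerSL ℂ y)
    intro v hv
    have h := hle hv
    rwa [LinearMap.mem_ker] at h
  have hxK : ∀ K, K ∈ 𝓛 → ¬(P ≤ K) → ∃ s, s ∈ Kᗮ ∧ ⟪s, x⟫_ℂ = 1 := by
    intro K hK hPK
    have hxnK : x ∉ K := fun hxk => hPK (sInf_le ⟨hK, hxk⟩)
    set s₀ := x - projVec K x with hs₀def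
    have hs₀mem : s₀ ∈ Kᗮ := sub_projVec_mem (hcl K hK) x
    have hs₀ne : s₀ ≠ 0 := by
      intro h0
      refine hxnK ?_
      have hxp : x = projVec K x := sub_eq_zero.1 h0
      rw [hxp]; exact projVec_mem (hcl K hK) x
    have hinner : ⟪s₀, x⟫_ℂ = ((‖s₀‖ ^ 2 : ℝ) : ℂ) := by
      have h1 : ⟪s₀, projVec K x⟫_ℂ = 0 :=
        inner_orthogonal_left hs₀mem (projVec_mem (hcl K hK) x)
      have h2 : ⟪s₀, x⟫_ℂ = ⟪s₀, s₀⟫_ℂ + ⟪s₀, projVec K x⟫_ℂ := by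
        rw [← inner_add_right]; congr 1; rw [hs₀def]; abel
      rw [h2, h1, add_zero, inner_self_eq_norm_sq_to_K]
      norm_cast
    refine ⟨(((‖s₀‖ ^ 2)⁻¹ : ℝ) : ℂ) • s₀, Submodule.smul_mem _ _ hs₀mem, ?_⟩
    rw [inner_smul_left, hinner, Complex.conj_ofReal]
    have hns : (‖s₀‖ ^ 2 : ℝ) ≠ 0 := by
      have := norm_ne_zero_iff.2 hs₀ne
      positivity
    norm_cast
    field_simp
  have hyK : ∀ K, K ∈ 𝓛 → ¬(K ≤ E) → ∃ p, p ∈ K ∧ ⟪y, p⟫_ℂ = 1 := by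
    intro K hK hKE
    have hex : ¬(∀ v ∈ K, ⟪y, v⟫_ℂ = 0) := by
      intro hall
      refine hKE (le_trans (le_sSup ?_) (Submodule.le_topologicalClosure _))
      exact ⟨hK, hall⟩
    push_neg at hex
    obtain ⟨p, hpK, hpne⟩ := hex
    refine ⟨(⟪y, p⟫_ℂ)⁻¹ • p, Submodule.smul_mem _ _ hpK, ?_⟩
    rw [inner_smul_right, inv_mul_cancel₀ hpne]
  have happrox : ∀ ε : ℝ, 0 < ε → ∃ N, N ∈ 𝓛 ∧ N < P ∧ ∃ a', a' ∈ N ∧ ‖a - a'‖ < ε := by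
    intro ε hε
    have hclosure := h𝓛.2 P hP𝓛
    have haP : a ∈ closure ((sSup {N | N ∈ 𝓛 ∧ N < P} : Submodule ℂ H) : Set H) := by
      rw [← Submodule.topologicalClosure_coe, ← hclosure]
      exact ha
    rw [Metric.mem_closure_iff] at haP
    obtain ⟨a', ha'mem, hdist⟩ := haP ε hε
    by_cases hne : {N : Submodule ℂ H | N ∈ 𝓛 ∧ N < P}.Nonempty
    · have hdir : DirectedOn (· ≤ ·) {N : Submodule ℂ H | N ∈ 𝓛 ∧ N < P} := by
        intro A hA B hB
        rcases hNest.2 A hA.1 B hB.1 with h | h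
        exacts [⟨B, hB, h, le_rfl⟩, ⟨A, hA, le_rfl, h⟩]
      obtain ⟨N, hN, ha'N⟩ := (Submodule.mem_sSup_of_directed hne hdir).1 ha'mem
      exact ⟨N, hN.1, hN.2, a', ha'N, by rwa [dist_eq_norm] at hdist⟩
    · exfalso
      rw [Set.not_nonempty_iff_eq_empty] at hne
      have hPbot : P = ⊥ := by
        rw [hclosure, hne, sSup_empty]
        refine le_antisymm ?_ bot_le
        refine Submodule.topologicalClosure_minimal _ le_rfl ?_
        rw [Submodule.bot_coe]
        exact isClosed_singleton
      exact ha0 ((Submodule.mem_bot ℂ).1 (hPbot ▸ ha))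
  have hEtop : E ≠ ⊤ := by
    intro h
    exact hy (inner_self_eq_zero.1 (hEy y (h ▸ Submodule.mem_top)))
  have htop𝓛 : ⊤ ∈ 𝓛 := hNest.1.2.2.1
  have hEltTop : E < ⊤ := lt_of_le_of_ne le_top hEtop
  suffices hsuf : ∀ ε : ℝ, 0 < ε → ∃ C, C ∈ 𝓜 ∧ ‖rankOne a b - C‖ < ε by
    have hmemcl : rankOne a b ∈ closure (𝓜 : Set (H →L[ℂ] H)) := by
      rw [Metric.mem_closure_iff]
      intro ε hε
      obtain ⟨C, hC, hlt⟩ := hsuf ε hε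
      exact ⟨C, hC, by rwa [dist_eq_norm]⟩
    rwa [hclosed.closure_eq] at hmemcl
  intro ε hε
  set εa : ℝ := min 1 (ε / (4 * (‖b‖ + 1))) with hεadef
  have hεapos : 0 < εa := lt_min one_pos (by positivity)
  set εb : ℝ := ε / (4 * (‖a‖ + 2)) with hεbdef
  have hεbpos : 0 < εb := by positivity
  obtain ⟨N, hN𝓛, hNP, a', ha'N, ha'⟩ := happrox εa hεapos
  have ha'norm : ‖a'‖ ≤ ‖a‖ + 1 := by
    have h1 : ‖a - a'‖ < 1 := lt_of_lt_of_le ha' (min_le_left _ _)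
    have h2 : ‖a'‖ ≤ ‖a - a'‖ + ‖a‖ := by
      calc ‖a'‖ = ‖(a' - a) + a‖ := by congr 1; abel
        _ ≤ ‖a' - a‖ + ‖a‖ := norm_add_le _ _
        _ = ‖a - a'‖ + ‖a‖ := by rw [norm_sub_rev]
    linarith
  have term1 : ‖rankOne (a - a') b‖ ≤ ε / 4 := by
    have h1 : ‖rankOne (a - a') b‖ ≤ ‖b‖ * ‖a - a'‖ := norm_rankOne_le _ _
    have h2 : ‖a - a'‖ ≤ ε / (4 * (‖b‖ + 1)) := le_trans (le_of_lt ha') (min_le_right _ _)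
    have h3 : ‖b‖ * ‖a - a'‖ ≤ ‖b‖ * (ε / (4 * (‖b‖ + 1))) :=
      mul_le_mul_of_nonneg_left h2 (norm_nonneg b)
    have h4 : ‖b‖ * (ε / (4 * (‖b‖ + 1))) ≤ ε / 4 := by
      rw [mul_div_assoc']
      rw [div_le_div_iff₀ (by positivity) (by norm_num : (0:ℝ) < 4)]
      nlinarith [norm_nonneg b, le_of_lt hε]
    linarith
  have term2'gen : (‖a‖ + 1) * εb ≤ ε / 4 := by
    rw [hεbdef, mul_div_assoc']
    rw [div_le_div_iff₀ (by positivity) (by norm_num : (0:ℝ) < 4)]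
    nlinarith [norm_nonneg a, le_of_lt hε]
  by_cases hPE : P ≤ E
  · -- easy case
    obtain ⟨K', hK'𝓛, hEK', _, hK'b⟩ := qsmall h𝓛 hE𝓛 htop𝓛 hEltTop hb hεbpos
    set b'' := b - projVec K' b with hb''def
    have hb''mem : b'' ∈ K'ᗮ := sub_projVec_mem (hcl _ hK'𝓛) b
    obtain ⟨s, hsN, hsx⟩ := hxK N hN𝓛 (not_le_of_gt hNP)
    have hya' : ⟪y, a'⟫_ℂ = 0 := hEy a' (((le_of_lt hNP).trans hPE) ha'N)
    have hT1 := rankOne_mem_nestAlg hNest hN𝓛 ha'N hsN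
    have hC1 := hLie _ hxy _ hT1
    have key1 : (rankOne x y).comp (rankOne a' s) - (rankOne a' s).comp (rankOne x y)
        = (-1 : ℂ) • rankOne a' y := by
      rw [rankOne_comp, rankOne_comp, hya', hsx, zero_smul, one_smul, zero_sub, neg_one_smul]
    rw [key1] at hC1
    have ha'y : rankOne a' y ∈ 𝓜 := mem_of_smul_mem (by norm_num) hC1
    obtain ⟨p₁, hp₁K', hyp₁⟩ := hyK K' hK'𝓛 (not_le_of_gt hEK')
    have hT2 := rankOne_mem_nestAlg hNest hK'𝓛 hp₁K' hb''mem
    have hC2 := hLie _ ha'y _ hT2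
    have ha'K' : a' ∈ K' := ((le_of_lt hNP).trans (hPE.trans (le_of_lt hEK'))) ha'N
    have hz : ⟪b'', a'⟫_ℂ = 0 := inner_orthogonal_left hb''mem ha'K'
    have key2 : (rankOne a' y).comp (rankOne p₁ b'') - (rankOne p₁ b'').comp (rankOne a' y)
        = rankOne a' b'' := by
      rw [rankOne_comp, rankOne_comp, hyp₁, hz, one_smul, zero_smul, sub_zero]
    rw [key2] at hC2
    refine ⟨rankOne a' b'', hC2, ?_⟩
    have hsplit : rankOne a b - rankOne a' b'' = rankOne (a - a') b + rankOne a' (b - b'') := by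
      have e1 : rankOne (a - a') b = rankOne a b - rankOne a' b := rankOne_sub_left a a' b
      have e2 : rankOne a' (b - b'') = rankOne a' b - rankOne a' b'' := rankOne_sub_right a' b b''
      rw [e1, e2]; abel
    have hbd : ‖b - b''‖ < εb := by
      rw [hb''def]
      simpa using hK'b
    have term2 : ‖rankOne a' (b - b'')‖ ≤ (‖a‖ + 1) * εb := by
      have h1 : ‖rankOne a' (b - b'')‖ ≤ ‖b - b''‖ * ‖a'‖ := norm_rankOne_le _ _
      nlinarith [norm_nonneg (b - b''), norm_nonneg a', le_of_lt hbd, ha'norm, hεbpos]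
    calc ‖rankOne a b - rankOne a' b''‖
        ≤ ‖rankOne (a - a') b‖ + ‖rankOne a' (b - b'')‖ := by
          rw [hsplit]; exact norm_add_le _ _
      _ ≤ ε / 4 + (‖a‖ + 1) * εb := add_le_add term1 term2
      _ ≤ ε / 4 + ε / 4 := by linarith
      _ < ε := by linarith
  · -- main case
    have hEltP : E < P := by
      rcases hNest.2 E hE𝓛 P hP𝓛 with h | h
      · exact lt_of_le_of_ne h (fun he => hPE (he ▸ le_rfl))
      · exact absurd h hPE
    clear hPE
    obtain ⟨K₀, hK₀𝓛, hEK₀, hK₀P⟩ := exists_strict_between h𝓛 hE𝓛 hP𝓛 hEltP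
    obtain ⟨K₂, hK₂𝓛, hEK₂, hK₂P, ha'K₂⟩ :
        ∃ K₂, K₂ ∈ 𝓛 ∧ E < K₂ ∧ K₂ < P ∧ a' ∈ K₂ := by
      rcases hNest.2 N hN𝓛 K₀ hK₀𝓛 with h | h
      · exact ⟨K₀, hK₀𝓛, hEK₀, hK₀P, h ha'N⟩
      · exact ⟨N, hN𝓛, lt_of_lt_of_le hEK₀ h, hNP, ha'N⟩
    obtain ⟨K', hK'𝓛, hEK', hK'K₂, hK'b⟩ := qsmall h𝓛 hE𝓛 hK₂𝓛 hEK₂ hb hεbpos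
    obtain ⟨Kmid, hKmid𝓛, hEKmid, hKmidK₂⟩ := exists_strict_between h𝓛 hE𝓛 hK₂𝓛 hEK₂
    obtain ⟨K₁, hK₁𝓛, hEK₁, hK₁K₂, hK₁K'⟩ :
        ∃ K₁, K₁ ∈ 𝓛 ∧ E < K₁ ∧ K₁ < K₂ ∧ K₁ ≤ K' := by
      rcases hNest.2 Kmid hKmid𝓛 K' hK'𝓛 with h | h
      · exact ⟨Kmid, hKmid𝓛, hEKmid, hKmidK₂, h⟩
      · exact ⟨K', hK'𝓛, hEK', lt_of_le_of_lt h hKmidK₂, le_rfl⟩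
    set b'' := b - projVec K₁ b with hb''def
    have hb''mem : b'' ∈ K₁ᗮ := sub_projVec_mem (hcl _ hK₁𝓛) b
    have hbdiff : ‖b - b''‖ < εb := by
      rw [hb''def]
      have h1 : ‖projVec K₁ b‖ ≤ ‖projVec K' b‖ :=
        norm_projVec_mono (hcl _ hK₁𝓛) (hcl _ hK'𝓛) hK₁K' b
      simpa using lt_of_le_of_lt h1 hK'b
    obtain ⟨p₁, hp₁K₁, hyp₁⟩ := hyK K₁ hK₁𝓛 (not_le_of_gt hEK₁)
    obtain ⟨s₂, hs₂K₂, hs₂x⟩ := hxK K₂ hK₂𝓛 (not_le_of_gt hK₂P)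
    set t : ℂ := ⟪b'', a'⟫_ℂ with htdef
    obtain ⟨n, hn⟩ := exists_nat_one_div_lt (show (0:ℝ) < (ε/4) / (‖t‖ + 1) by positivity)
    have hterm3 : ‖t‖ * (1 / ((n:ℝ) + 1)) ≤ ε / 4 := by
      have ha1 : ‖t‖ ≤ ‖t‖ + 1 := le_add_of_nonneg_right (by norm_num)
      have ha2 : (0:ℝ) ≤ 1/((n:ℝ)+1) := by positivity
      have ha3 : (0:ℝ) ≤ ‖t‖+1 := by positivity
      have h1 : ‖t‖ * (1 / ((n:ℝ) + 1)) ≤ (‖t‖+1) * ((ε/4)/(‖t‖+1)) :=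
        mul_le_mul ha1 (le_of_lt hn) ha2 ha3
      have hne0 : (‖t‖ : ℝ) + 1 ≠ 0 := by positivity
      have h2 : (‖t‖+1) * ((ε/4)/(‖t‖+1)) = ε/4 := by
        field_simp
      linarith
    obtain ⟨e, heK₂, heK₁, heON⟩ := exists_orthochain h𝓛 hK₁𝓛 hK₂𝓛 hK₁K₂ (n+1)
    set Z : H →L[ℂ] H := (2⁻¹ : ℂ) • (rankOne x s₂ + rankOne p₁ y) with hZdef
    have hmain : rankOne a' b'' - t • Z ∈ 𝓜 :=
      master_identity hNest hLie hxy hK₁𝓛 hK₂𝓛 (le_of_lt hK₁K₂) hp₁K₁ hyp₁ hs₂K₂ hs₂x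
        ha'K₂ hb''mem
    have hei : ∀ i : Fin (n+1), rankOne (e i) (e i) - Z ∈ 𝓜 := by
      intro i
      have h1 := master_identity hNest hLie hxy hK₁𝓛 hK₂𝓛 (le_of_lt hK₁K₂) hp₁K₁ hyp₁
        hs₂K₂ hs₂x (heK₂ i) (heK₁ i)
      have h2 : ⟪e i, e i⟫_ℂ = 1 := by
        rw [inner_self_eq_norm_sq_to_K, heON.1 i]
        norm_num
      rwa [h2, one_smul] at h1
    set c : ℂ := t / ((n : ℂ) + 1) with hcdef
    have hnne : ((n:ℂ) + 1) ≠ 0 := by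
      have hcast : ((n:ℂ)+1) = ((n+1 : ℕ) : ℂ) := by push_cast; ring
      rw [hcast]
      exact Nat.cast_ne_zero.mpr (Nat.succ_ne_zero n)
    have hc : c * ((n:ℂ) + 1) = t := by rw [hcdef]; field_simp
    have hsum : (∑ i : Fin (n+1), (rankOne (e i) (e i) - Z))
        = (∑ i : Fin (n+1), rankOne (e i) (e i)) - ((n:ℂ) + 1) • Z := by
      rw [Finset.sum_sub_distrib, Finset.sum_const, Finset.card_univ, Fintype.card_fin]
      have hZc : ((n:ℂ)+1) • Z = (n+1) • Z := by
        rw [show ((n:ℂ)+1) = ((n+1:ℕ):ℂ) by push_cast; ring, Nat.cast_smul_eq_nsmul]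
      rw [hZc]
    have hCmem : rankOne a' b'' - c • ∑ i : Fin (n+1), rankOne (e i) (e i) ∈ 𝓜 := by
      have h1 : rankOne a' b'' - c • ∑ i : Fin (n+1), rankOne (e i) (e i)
          = (rankOne a' b'' - t • Z)
            - c • ((∑ i : Fin (n+1), rankOne (e i) (e i)) - ((n:ℂ)+1) • Z) := by
        have hzz : c • (((n:ℂ)+1) • Z) = t • Z := by rw [smul_smul, hc]
        rw [smul_sub, hzz]
        abel
      rw [h1, ← hsum]
      exact 𝓜.sub_mem hmain (𝓜.smul_mem _ (Submodule.sum_mem _ fun i _ => hei i))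
    refine ⟨_, hCmem, ?_⟩
    have hsplit : rankOne a b - (rankOne a' b'' - c • ∑ i : Fin (n+1), rankOne (e i) (e i))
        = (rankOne (a - a') b + rankOne a' (b - b''))
          + c • ∑ i : Fin (n+1), rankOne (e i) (e i) := by
      have e1 : rankOne (a - a') b = rankOne a b - rankOne a' b := rankOne_sub_left a a' b
      have e2 : rankOne a' (b - b'') = rankOne a' b - rankOne a' b'' := rankOne_sub_right a' b b''
      rw [e1, e2]
      abel
    have term2 : ‖rankOne a' (b - b'')‖ ≤ (‖a‖ + 1) * εb := by
      have h1 : ‖rankOne a' (b - b'')‖ ≤ ‖b - b''‖ * ‖a'‖ := norm_rankOne_le _ _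
      nlinarith [norm_nonneg (b - b''), norm_nonneg a', le_of_lt hbdiff, ha'norm, hεbpos]
    have term3 : ‖c • ∑ i : Fin (n+1), rankOne (e i) (e i)‖ ≤ ε / 4 := by
      rw [norm_smul]
      have h1 : ‖c‖ = ‖t‖ / ((n:ℝ)+1) := by
        rw [hcdef, norm_div]
        congr 1
        have hcast : ((n:ℂ)+1) = (((n:ℝ)+1 : ℝ) : ℂ) := by push_cast; ring
        rw [hcast, Complex.norm_real, Real.norm_eq_abs]
        exact abs_of_pos (by positivity)
      have h2 := norm_sum_rankOne_le heON
      calc ‖c‖ * ‖∑ i : Fin (n+1), rankOne (e i) (e i)‖ ≤ ‖c‖ * 1 :=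
            mul_le_mul_of_nonneg_left h2 (norm_nonneg c)
        _ = ‖t‖ / ((n:ℝ)+1) := by rw [mul_one, h1]
        _ = ‖t‖ * (1/((n:ℝ)+1)) := by ring
        _ ≤ ε / 4 := hterm3
    calc ‖rankOne a b - (rankOne a' b'' - c • ∑ i : Fin (n+1), rankOne (e i) (e i))‖
        ≤ ‖rankOne (a - a') b + rankOne a' (b - b'')‖
          + ‖c • ∑ i : Fin (n+1), rankOne (e i) (e i)‖ := by
          rw [hsplit]; exact norm_add_le _ _
      _ ≤ (‖rankOne (a - a') b‖ + ‖rankOne a' (b - b'')‖)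
          + ‖c • ∑ i : Fin (n+1), rankOne (e i) (e i)‖ := by
          have := norm_add_le (rankOne (a - a') b) (rankOne a' (b - b''))
          linarith
      _ ≤ (ε/4 + (‖a‖+1)*εb) + ε/4 := add_le_add (add_le_add term1 term2) term3
      _ ≤ (ε/4 + ε/4) + ε/4 := by linarith
      _ < ε := by linarith

end MainProof
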